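/- arXiv:math-ph/0304024 — 2 statements merged into one kernel-verified Lean document; each statement's English description precedes it below -/
import Mathlib

section
/- With the maximal correlation coefficient r(t) as above, for any mean-zero g_s ∈ L²(F^+_{z+s}) and g_t ∈ L²(F^+_{z+t}) with s,t ≥ 0, the conditional expectations h_s = E[g_s|F_z], h_t = E[g_t|F_z] satisfy |E[h_s h_t]| ≤ r(s) r(t) E^{1/2}[g_s²] E^{1/2}[g_t²]. -/
open MeasureTheory ENNReal

/-- Cauchy–Schwarz for integrals. -/
lemma cs_integral {Ω : Type*} [mΩ : MeasurableSpace Ω] {μ : Measure Ω} {f g : Ω → ℝ}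
    (hf : MemLp f 2 μ) (hg : MemLp g 2 μ) :
    |∫ ω, f ω * g ω ∂μ| ≤ Real.sqrt (∫ ω, (f ω) ^ 2 ∂μ) * Real.sqrt (∫ ω, (g ω) ^ 2 ∂μ) := by
  have h2 : (ENNReal.ofReal (2 : ℝ)) = 2 := by norm_num
  have hconj : Real.HolderConjugate 2 2 := Real.HolderConjugate.two_two
  have habs : ∀ (k : Ω → ℝ), MemLp k 2 μ → MemLp (fun ω => |k ω|) (ENNReal.ofReal 2) μ := by
    intro k hk
    rw [h2]
    simpa [Real.norm_eq_abs] using hk.norm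
  have key := integral_mul_le_Lp_mul_Lq_of_nonneg hconj
    (Filter.Eventually.of_forall fun ω => abs_nonneg (f ω))
    (Filter.Eventually.of_forall fun ω => abs_nonneg (g ω)) (habs f hf) (habs g hg)
  have habs_pow : ∀ x : ℝ, |x| ^ (2 : ℝ) = x ^ 2 := fun x => by
    rw [show (2 : ℝ) = ((2 : ℕ) : ℝ) by norm_num, Real.rpow_natCast, sq_abs]
  calc |∫ ω, f ω * g ω ∂μ| ≤ ∫ ω, |f ω| * |g ω| ∂μ := by
        simpa [Real.norm_eq_abs, abs_mul] using
          norm_integral_le_integral_norm (fun ω => f ω * g ω) (μ := μ)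
    _ ≤ (∫ ω, |f ω| ^ (2:ℝ) ∂μ) ^ (1 / (2:ℝ)) * (∫ ω, |g ω| ^ (2:ℝ) ∂μ) ^ (1 / (2:ℝ)) := key
    _ = Real.sqrt (∫ ω, (f ω) ^ 2 ∂μ) * Real.sqrt (∫ ω, (g ω) ^ 2 ∂μ) := by
        simp_rw [habs_pow, Real.sqrt_eq_rpow]

/-- The conditional expectation of an L² function is in L². -/
lemma condexp_memℒp_two {Ω : Type*} {m : MeasurableSpace Ω} [mΩ : MeasurableSpace Ω]
    {μ : Measure Ω} [IsFiniteMeasure μ] (hm : m ≤ mΩ) {g : Ω → ℝ}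
    (hg : MemLp g 2 μ) : MemLp (μ[g|m]) 2 μ := by
  have hint : Integrable g μ := hg.integrable one_le_two
  set H := condExpL2 ℝ ℝ hm (hg.toLp g) with hH
  have heq : ((H : Lp ℝ 2 μ) : Ω → ℝ) =ᵐ[μ] μ[g|m] := by
    refine ae_eq_condExp_of_forall_setIntegral_eq hm hint
      (fun s _ _ => (Lp.memLp (H : Lp ℝ 2 μ)).integrable one_le_two |>.integrableOn)
      (fun s hs hμs => ?_) (lpMeas.aestronglyMeasurable _)
    rw [integral_condExpL2_eq hm (hg.toLp g) hs hμs.ne]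
    exact setIntegral_congr_ae (hm s hs) ((hg.coeFn_toLp).mono fun x hx _ => hx)
  exact (Lp.memLp (H : Lp ℝ 2 μ)).ae_eq heq

/-- Pull-out identity: `∫ E[g|m] g = ∫ E[g|m]²`. -/
lemma integral_condexp_mul_self {Ω : Type*} {m : MeasurableSpace Ω} [mΩ : MeasurableSpace Ω]
    {μ : Measure Ω} [IsProbabilityMeasure μ] (hm : m ≤ mΩ) {g : Ω → ℝ}
    (hg2 : MemLp g 2 μ) :
    ∫ ω, (μ[g|m]) ω * g ω ∂μ = ∫ ω, ((μ[g|m]) ω) ^ 2 ∂μ := by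
  have hh2 : MemLp (μ[g|m]) 2 μ := condexp_memℒp_two hm hg2
  have hint : Integrable ((μ[g|m]) * g) μ := by
    have hpqr : (1 : ℝ≥0∞) / 1 = 1 / 2 + 1 / 2 := by
      rw [ENNReal.div_add_div_same, ENNReal.div_self (by norm_num) (by norm_num), one_add_one_eq_two,
        ENNReal.div_self (by norm_num) (by norm_num)]
    have := hg2.smul hh2 (r := 1)
    exact memLp_one_iff_integrable.mp this
  have hpull := condExp_mul_of_stronglyMeasurable_left (stronglyMeasurable_condExp (f := g))
    hint (hg2.integrable one_le_two)
  have h1 : ∫ ω, ((μ[g|m]) * g) ω ∂μ = ∫ ω, (μ[((μ[g|m]) * g)|m]) ω ∂μ :=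
    (integral_condExp hm).symm
  have h2 : ∫ ω, (μ[((μ[g|m]) * g)|m]) ω ∂μ = ∫ ω, ((μ[g|m]) ω) ^ 2 ∂μ :=
    integral_congr_ae (hpull.mono fun ω hω => by
      rw [hω]; simp [Pi.mul_apply, sq])
  calc ∫ ω, (μ[g|m]) ω * g ω ∂μ = ∫ ω, ((μ[g|m]) * g) ω ∂μ := rfl
    _ = ∫ ω, ((μ[g|m]) ω) ^ 2 ∂μ := h1.trans h2

/-- The maximal correlation bound for the L² norm of a conditional expectation. -/
lemma maximal_corr_bound {Ω : Type*} {m m' : MeasurableSpace Ω} [mΩ : MeasurableSpace Ω]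
    {μ : Measure Ω} [IsProbabilityMeasure μ] (hm : m ≤ mΩ) {g : Ω → ℝ}
    (hgm : StronglyMeasurable[m'] g) (hg2 : MemLp g 2 μ) (hg0 : (∫ ω, g ω ∂μ) = 0) :
    Real.sqrt (∫ ω, ((μ[g|m]) ω) ^ 2 ∂μ) ≤
      sSup {c : ℝ | ∃ h gg : Ω → ℝ,
        StronglyMeasurable[m] h ∧ MemLp h 2 μ ∧
          (∫ ω, h ω ∂μ) = 0 ∧ (∫ ω, (h ω) ^ 2 ∂μ) = 1 ∧
        StronglyMeasurable[m'] gg ∧ MemLp gg 2 μ ∧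
          (∫ ω, gg ω ∂μ) = 0 ∧ (∫ ω, (gg ω) ^ 2 ∂μ) = 1 ∧
        c = ∫ ω, h ω * gg ω ∂μ} * Real.sqrt (∫ ω, (g ω) ^ 2 ∂μ) := by
  set S : Set ℝ := {c : ℝ | ∃ h gg : Ω → ℝ,
        StronglyMeasurable[m] h ∧ MemLp h 2 μ ∧
          (∫ ω, h ω ∂μ) = 0 ∧ (∫ ω, (h ω) ^ 2 ∂μ) = 1 ∧
        StronglyMeasurable[m'] gg ∧ MemLp gg 2 μ ∧
          (∫ ω, gg ω ∂μ) = 0 ∧ (∫ ω, (gg ω) ^ 2 ∂μ) = 1 ∧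
        c = ∫ ω, h ω * gg ω ∂μ} with hS
  have hbdd : BddAbove S := by
    refine ⟨1, fun c hc => ?_⟩
    obtain ⟨h, gg, _, hl2, _, h1, _, gl2, _, g1, rfl⟩ := hc
    calc ∫ ω, h ω * gg ω ∂μ ≤ |∫ ω, h ω * gg ω ∂μ| := le_abs_self _
      _ ≤ Real.sqrt (∫ ω, (h ω) ^ 2 ∂μ) * Real.sqrt (∫ ω, (gg ω) ^ 2 ∂μ) :=
          cs_integral hl2 gl2
      _ = 1 := by rw [h1, g1, Real.sqrt_one, mul_one]
  have hSnn : 0 ≤ sSup S := by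
    rcases Set.eq_empty_or_nonempty S with hSe | ⟨c, hc⟩
    · rw [hSe]; simp [Real.sSup_empty]
    · have hc' : -c ∈ S := by
        obtain ⟨h, gg, hm1, hl2, h0, h1, gm1, gl2, g0, g1, hceq⟩ := hc
        refine ⟨fun ω => -h ω, gg, hm1.neg, hl2.neg, ?_, ?_, gm1, gl2, g0, g1, ?_⟩
        · rw [integral_neg, h0, neg_zero]
        · simp only [neg_sq]; exact h1
        · simp only [neg_mul]; rw [integral_neg, hceq]
      have k1 := le_csSup hbdd hc
      have k2 := le_csSup hbdd hc'
      linarith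
  set h : Ω → ℝ := μ[g|m] with hh
  have hh2 : MemLp h 2 μ := condexp_memℒp_two hm hg2
  have hhm : StronglyMeasurable[m] h := stronglyMeasurable_condExp
  have hh0 : (∫ ω, h ω ∂μ) = 0 := by rw [hh, integral_condExp hm, hg0]
  set A : ℝ := Real.sqrt (∫ ω, (h ω) ^ 2 ∂μ) with hA
  set B : ℝ := Real.sqrt (∫ ω, (g ω) ^ 2 ∂μ) with hB
  have hA2 : A ^ 2 = ∫ ω, (h ω) ^ 2 ∂μ :=
    Real.sq_sqrt (integral_nonneg fun ω => sq_nonneg _)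
  have hB2 : B ^ 2 = ∫ ω, (g ω) ^ 2 ∂μ :=
    Real.sq_sqrt (integral_nonneg fun ω => sq_nonneg _)
  have hpull : ∫ ω, h ω * g ω ∂μ = ∫ ω, (h ω) ^ 2 ∂μ :=
    integral_condexp_mul_self hm hg2
  by_cases hA0 : A = 0
  · rw [hA0]
    exact mul_nonneg hSnn (Real.sqrt_nonneg _)
  · have hApos : 0 < A := lt_of_le_of_ne (Real.sqrt_nonneg _) (Ne.symm hA0)
    have hABle : A ^ 2 ≤ A * B := by
      rw [hA2, ← hpull]
      calc ∫ ω, h ω * g ω ∂μ ≤ |∫ ω, h ω * g ω ∂μ| := le_abs_self _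
        _ ≤ A * B := cs_integral hh2 hg2
    have hBpos : 0 < B := by nlinarith
    have hmem : A / B ∈ S := by
      refine ⟨fun ω => A⁻¹ * h ω, fun ω => B⁻¹ * g ω, hhm.const_mul _,
        hh2.const_mul _, ?_, ?_, hgm.const_mul _, hg2.const_mul _, ?_, ?_, ?_⟩
      · rw [integral_const_mul, hh0, mul_zero]
      · simp_rw [mul_pow]
        rw [integral_const_mul, ← hA2]
        field_simp
      · rw [integral_const_mul, hg0, mul_zero]
      · simp_rw [mul_pow]
        rw [integral_const_mul, ← hB2]
        field_simp
      · have hrw : ∀ ω, (A⁻¹ * h ω) * (B⁻¹ * g ω) = (A⁻¹ * B⁻¹) * (h ω * g ω) :=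
          fun ω => by ring
        simp_rw [hrw]
        rw [integral_const_mul, hpull, ← hA2]
        field_simp
    have hle := le_csSup hbdd hmem
    calc A = A / B * B := by field_simp
      _ ≤ sSup S * B := mul_le_mul_of_nonneg_right hle hBpos.le

/-- Cross-correlation bound for conditional expectations: for mean-zero
square-integrable `g_s`, `g_t` measurable w.r.t. the future σ-algebras,
`|E[h_s h_t]| ≤ r(s) r(t) E[g_s²]^{1/2} E[g_t²]^{1/2}` where
`h_u = E[g_u | F_z]` and `r(u)` is the maximal correlation coefficient. -/
theorem condexp_cross_correlation {Ω : Type*} [mΩ : MeasurableSpace Ω]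
    (μ : Measure Ω) [IsProbabilityMeasure μ]
    (m : MeasurableSpace Ω) (hm : m ≤ mΩ)
    (mplus : ℝ → MeasurableSpace Ω) (hmplus : ∀ u, mplus u ≤ mΩ)
    (r : ℝ → ℝ)
    (hr : ∀ u : ℝ, 0 ≤ u → r u = sSup {c : ℝ | ∃ h g : Ω → ℝ,
      StronglyMeasurable[m] h ∧ MemLp h 2 μ ∧
        (∫ ω, h ω ∂μ) = 0 ∧ (∫ ω, (h ω) ^ 2 ∂μ) = 1 ∧
      StronglyMeasurable[mplus u] g ∧ MemLp g 2 μ ∧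
        (∫ ω, g ω ∂μ) = 0 ∧ (∫ ω, (g ω) ^ 2 ∂μ) = 1 ∧
      c = ∫ ω, h ω * g ω ∂μ})
    (s t : ℝ) (hs : 0 ≤ s) (ht : 0 ≤ t)
    (gs gt : Ω → ℝ)
    (hgsm : StronglyMeasurable[mplus s] gs) (hgs2 : MemLp gs 2 μ)
    (hgs0 : (∫ ω, gs ω ∂μ) = 0)
    (hgtm : StronglyMeasurable[mplus t] gt) (hgt2 : MemLp gt 2 μ)
    (hgt0 : (∫ ω, gt ω ∂μ) = 0) :
    |∫ ω, (μ[gs | m]) ω * (μ[gt | m]) ω ∂μ| ≤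
      r s * r t * Real.sqrt (∫ ω, (gs ω) ^ 2 ∂μ) *
        Real.sqrt (∫ ω, (gt ω) ^ 2 ∂μ) := by
  have hhs2 : MemLp (μ[gs|m]) 2 μ := condexp_memℒp_two (mΩ := mΩ) hm hgs2
  have hht2 : MemLp (μ[gt|m]) 2 μ := condexp_memℒp_two (mΩ := mΩ) hm hgt2
  have h1 : |∫ ω, (μ[gs|m]) ω * (μ[gt|m]) ω ∂μ| ≤
      Real.sqrt (∫ ω, ((μ[gs|m]) ω) ^ 2 ∂μ) * Real.sqrt (∫ ω, ((μ[gt|m]) ω) ^ 2 ∂μ) :=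
    cs_integral (mΩ := mΩ) hhs2 hht2
  have h2 : Real.sqrt (∫ ω, ((μ[gs|m]) ω) ^ 2 ∂μ) ≤
      r s * Real.sqrt (∫ ω, (gs ω) ^ 2 ∂μ) := by
    rw [hr s hs]
    exact maximal_corr_bound (mΩ := mΩ) hm hgsm hgs2 hgs0
  have h3 : Real.sqrt (∫ ω, ((μ[gt|m]) ω) ^ 2 ∂μ) ≤
      r t * Real.sqrt (∫ ω, (gt ω) ^ 2 ∂μ) := by
    rw [hr t ht]
    exact maximal_corr_bound (mΩ := mΩ) hm hgtm hgt2 hgt0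
  calc |∫ ω, (μ[gs|m]) ω * (μ[gt|m]) ω ∂μ|
      ≤ Real.sqrt (∫ ω, ((μ[gs|m]) ω) ^ 2 ∂μ) *
        Real.sqrt (∫ ω, ((μ[gt|m]) ω) ^ 2 ∂μ) := h1
    _ ≤ (r s * Real.sqrt (∫ ω, (gs ω) ^ 2 ∂μ)) *
        (r t * Real.sqrt (∫ ω, (gt ω) ^ 2 ∂μ)) :=
        mul_le_mul h2 h3 (Real.sqrt_nonneg _) ((Real.sqrt_nonneg _).trans h2)
    _ = r s * r t * Real.sqrt (∫ ω, (gs ω) ^ 2 ∂μ) *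
        Real.sqrt (∫ ω, (gt ω) ^ 2 ∂μ) := by ring
end

section
/- Let Φ : ℝ^{d+1} → [0,∞) satisfy Φ(ξ,k) ≤ K (η² + |k|² + ξ²)^{−H−(d+1)/2} for |(ξ,k)| ≤ ρ and Φ = 0 for |(ξ,k)| ≥ ρ, with H ∈ (0,1), 0 < η ≤ 1 ≤ ρ. Then there is a constant C = C(K,d,H) such that ∫∫ |k|² Φ(ξ,k) dξ dk ≤ C (η^{2−2H} + ρ^{2−2H}). -/
open MeasureTheory
set_option maxHeartbeats 1000000

/-- Auxiliary pointwise estimate: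
if `M² ≤ S`, `x² ≤ S`, `φ ≤ K S^e` with `e + 1 ≤ 0`, then `x² φ ≤ K M^(2(e+1))`. -/
lemma spectral_aux_pt (K S M e a x φ : ℝ) (hK : 0 < K) (hS : 0 < S) (hM : 0 < M)
    (hsq : M ^ 2 ≤ S) (he : e + 1 ≤ 0) (ha : 2 * (e + 1) = a) (hx2 : x ^ 2 ≤ S)
    (hφ : φ ≤ K * S ^ e) (hx0 : 0 ≤ x) : x ^ 2 * φ ≤ K * M ^ a := by
  have h4 : (0:ℝ) ≤ S ^ e := Real.rpow_nonneg hS.le _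
  have h5 : S * S ^ e = S ^ (e + 1) := by
    rw [Real.rpow_add hS, Real.rpow_one]; ring
  have h6 : S ^ (e + 1) ≤ (M ^ 2) ^ (e + 1) :=
    Real.rpow_le_rpow_of_nonpos (by positivity) hsq he
  have h7 : ((M ^ 2 : ℝ)) ^ (e + 1) = M ^ a := by
    rw [← Real.rpow_natCast M 2, ← Real.rpow_mul hM.le]
    rw [← ha]; norm_num
  calc x ^ 2 * φ ≤ x ^ 2 * (K * S ^ e) :=
        mul_le_mul_of_nonneg_left hφ (by positivity)
    _ = K * (x ^ 2 * S ^ e) := by ring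
    _ ≤ K * (S * S ^ e) :=
        mul_le_mul_of_nonneg_left (mul_le_mul_of_nonneg_right hx2 h4) hK.le
    _ = K * S ^ (e + 1) := by rw [h5]
    _ ≤ K * (M ^ 2) ^ (e + 1) := mul_le_mul_of_nonneg_left h6 hK.le
    _ = K * M ^ a := by rw [h7]

/-- Second-moment bound for a truncated power-law spectral density:
`∫∫ |k|² Φ(ξ,k) dξ dk ≤ C (η^{2−2H} + ρ^{2−2H})`. -/
theorem spectral_second_moment_bound (d : ℕ) (hd : 1 ≤ d) (K H : ℝ)
    (hK : 0 < K) (hH : H ∈ Set.Ioo (0 : ℝ) 1) :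
    ∃ C : ℝ, 0 < C ∧ ∀ (η ρ : ℝ), 0 < η → η ≤ 1 → 1 ≤ ρ →
      ∀ Φ : ℝ × EuclideanSpace ℝ (Fin d) → ℝ,
        (∀ q, 0 ≤ Φ q) →
        (∀ (ξ : ℝ) (k : EuclideanSpace ℝ (Fin d)),
          Real.sqrt (ξ ^ 2 + ‖k‖ ^ 2) ≤ ρ →
            Φ (ξ, k) ≤ K * (η ^ 2 + ‖k‖ ^ 2 + ξ ^ 2) ^ (-H - ((d : ℝ) + 1) / 2)) →
        (∀ (ξ : ℝ) (k : EuclideanSpace ℝ (Fin d)),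
          ρ ≤ Real.sqrt (ξ ^ 2 + ‖k‖ ^ 2) → Φ (ξ, k) = 0) →
        ∫ q : ℝ × EuclideanSpace ℝ (Fin d), ‖q.2‖ ^ 2 * Φ q ≤
          C * (η ^ (2 - 2 * H) + ρ ^ (2 - 2 * H)) := by
  obtain ⟨hH0, hH1⟩ := hH
  have h2H : (0:ℝ) < 2 - 2*H := by linarith
  have hd1 : (1:ℝ) ≤ (d:ℝ) := by exact_mod_cast hd
  haveI hHaar : (volume : Measure (ℝ × EuclideanSpace ℝ (Fin d))).IsAddHaarMeasure := by
    rw [MeasureTheory.Measure.volume_eq_prod]; infer_instance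
  have hdim : Module.finrank ℝ (ℝ × EuclideanSpace ℝ (Fin d)) = 1 + d := by
    rw [Module.finrank_prod, finrank_euclideanSpace_fin, Module.finrank_self]
  set c : ℝ := (volume (Metric.ball (0 : ℝ × EuclideanSpace ℝ (Fin d)) 1)).toReal with hc
  have hc0 : 0 < c := by
    rw [hc]
    exact ENNReal.toReal_pos (Metric.measure_ball_pos volume 0 one_pos).ne' measure_ball_lt_top.ne
  refine ⟨(1 + (d:ℝ)) * c * K * (1 + 1/(2-2*H)), by positivity, ?_⟩
  intro η ρ hη hη1 hρ Φ hΦ0 hΦle hΦvanish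
  have hηρ : η ≤ ρ := hη1.trans hρ
  have hρ0 : (0:ℝ) < ρ := lt_of_lt_of_le one_pos hρ
  set a : ℝ := 2 - 2*H - ((d:ℝ)+1) with ha_def
  have ha_neg : a ≤ 0 := by rw [ha_def]; linarith
  have hmaxpos : ∀ y : ℝ, 0 < max η y := fun y => lt_of_lt_of_le hη (le_max_left _ _)
  set h : ℝ → ℝ := fun y => K * (max η y) ^ a with hh_def
  have hh_cont : Continuous h :=
    continuous_const.mul ((continuous_const.max continuous_id).rpow_const
      (fun y => Or.inl (hmaxpos y).ne'))
  have hh_nonneg : ∀ y, 0 ≤ h y := fun y => mul_nonneg hK.le (Real.rpow_nonneg (hmaxpos y).le _)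
  have hh_le : ∀ y, h y ≤ K * η ^ a := fun y =>
    mul_le_mul_of_nonneg_left (Real.rpow_le_rpow_of_nonpos hη (le_max_left _ _) ha_neg) hK.le
  set f : ℝ → ℝ := fun y => Set.indicator (Set.Iio ρ) h y with hf_def
  have hf_nonneg : ∀ y, 0 ≤ f y := fun y => Set.indicator_nonneg (fun y _ => hh_nonneg y) y
  have hf_le : ∀ y, f y ≤ K * η ^ a := by
    intro y
    by_cases hy : y ∈ Set.Iio ρ
    · rw [hf_def]; simp only [Set.indicator_of_mem hy]; exact hh_le y
    · rw [hf_def]; simp only [Set.indicator_of_notMem hy]; positivity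
  have hf_meas : Measurable f := hh_cont.measurable.indicator measurableSet_Iio
  -- pointwise bound
  have key : ∀ q : ℝ × EuclideanSpace ℝ (Fin d), ‖q.2‖ ^ 2 * Φ q ≤ f ‖q‖ := by
    rintro ⟨ξ, k⟩
    simp only
    by_cases hcase : ρ ≤ Real.sqrt (ξ ^ 2 + ‖k‖ ^ 2)
    · rw [hΦvanish ξ k hcase, mul_zero]; exact hf_nonneg _
    push_neg at hcase
    have hsum_nonneg : (0:ℝ) ≤ ξ ^ 2 + ‖k‖ ^ 2 := by positivity
    have hnorm_le : ‖(ξ, k)‖ ≤ Real.sqrt (ξ ^ 2 + ‖k‖ ^ 2) := by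
      rw [Prod.norm_def]
      apply max_le
      · exact Real.le_sqrt_of_sq_le (by rw [Real.norm_eq_abs, sq_abs]; nlinarith [sq_nonneg ‖k‖])
      · exact Real.le_sqrt_of_sq_le (by nlinarith [sq_nonneg ξ])
    have hm_lt : ‖(ξ, k)‖ < ρ := lt_of_le_of_lt hnorm_le hcase
    have hfm : f ‖(ξ, k)‖ = K * (max η ‖(ξ, k)‖) ^ a :=
      Set.indicator_of_mem (Set.mem_Iio.mpr hm_lt) h
    rw [hfm]
    have hm2 : ‖(ξ, k)‖ ^ 2 ≤ ξ ^ 2 + ‖k‖ ^ 2 := by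
      calc ‖(ξ, k)‖ ^ 2 ≤ (Real.sqrt (ξ^2+‖k‖^2)) ^ 2 :=
            pow_le_pow_left₀ (norm_nonneg _) hnorm_le 2
        _ = ξ ^ 2 + ‖k‖ ^ 2 := Real.sq_sqrt hsum_nonneg
    apply spectral_aux_pt K (η ^ 2 + ‖k‖ ^ 2 + ξ ^ 2) (max η ‖(ξ, k)‖)
      (-H - ((d:ℝ) + 1) / 2) a ‖k‖ (Φ (ξ, k)) hK (by positivity) (hmaxpos _)
    · -- (max η ‖(ξ,k)‖)² ≤ S
      rcases max_cases η ‖(ξ, k)‖ with ⟨hmax, _⟩ | ⟨hmax, _⟩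
      · rw [hmax]; nlinarith [sq_nonneg ξ, sq_nonneg ‖k‖]
      · rw [hmax]; nlinarith [sq_nonneg η]
    · linarith
    · rw [ha_def]; push_cast; ring
    · nlinarith [sq_nonneg η, sq_nonneg ξ]
    · exact hΦle ξ k hcase.le
    · exact norm_nonneg k
  -- integrability on the product space
  have hintf : Integrable (fun x : ℝ × EuclideanSpace ℝ (Fin d) => f ‖x‖) := by
    have hind : Integrable ((Metric.closedBall (0 : ℝ × EuclideanSpace ℝ (Fin d)) ρ).indicator
        (fun _ => K * η ^ a)) := by
      rw [integrable_indicator_iff measurableSet_closedBall]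
      exact integrableOn_const measure_closedBall_lt_top.ne
    refine hind.mono' ((hf_meas.comp measurable_norm).aestronglyMeasurable) ?_
    filter_upwards with x
    rw [Real.norm_eq_abs, abs_of_nonneg (hf_nonneg _)]
    by_cases hx : ‖x‖ < ρ
    · have hxmem : x ∈ Metric.closedBall (0 : ℝ × EuclideanSpace ℝ (Fin d)) ρ := by
        rw [Metric.mem_closedBall, dist_zero_right]; exact hx.le
      rw [Set.indicator_of_mem hxmem]
      exact hf_le _
    · have hz : f ‖x‖ = 0 := by
        rw [hf_def]; exact Set.indicator_of_notMem (by simpa using hx) h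
      rw [hz]
      exact Set.indicator_nonneg (fun _ _ => by positivity) x
  -- polar coordinates
  have step2 : ∫ x : ℝ × EuclideanSpace ℝ (Fin d), f ‖x‖ =
      (1 + (d:ℝ)) * (c * ∫ y in Set.Ioi (0:ℝ), y ^ d * f y) := by
    rw [integral_fun_norm_addHaar (volume : Measure (ℝ × EuclideanSpace ℝ (Fin d))) f, hdim,
        Nat.add_sub_cancel_left]
    simp only [nsmul_eq_mul, smul_eq_mul, measureReal_def, ← hc]
    push_cast
    ring
  -- one-dimensional estimates
  set g : ℝ → ℝ := fun y => y ^ d * f y with hg_def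
  have hgiIoc : IntegrableOn g (Set.Ioc 0 ρ) := by
    have hconst : IntegrableOn (fun _ : ℝ => ρ ^ d * (K * η ^ a)) (Set.Ioc 0 ρ) :=
      integrableOn_const measure_Ioc_lt_top.ne
    refine hconst.mono' (((measurable_id.pow_const d).mul hf_meas).aestronglyMeasurable) ?_
    filter_upwards [ae_restrict_mem measurableSet_Ioc] with y hy
    rw [Real.norm_eq_abs, abs_of_nonneg (mul_nonneg (pow_nonneg hy.1.le d) (hf_nonneg y))]
    exact mul_le_mul (pow_le_pow_left₀ hy.1.le hy.2 d) (hf_le y) (hf_nonneg y) (by positivity)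
  have hg_zero : Set.EqOn g 0 (Set.Ioi ρ) := by
    intro y hy
    have hy' : y ∉ Set.Iio ρ := by simp only [Set.mem_Iio, not_lt]; exact (Set.mem_Ioi.mp hy).le
    simp only [hg_def, hf_def, Set.indicator_of_notMem hy', mul_zero, Pi.zero_apply]
  have hgiIoi : IntegrableOn g (Set.Ioi ρ) :=
    (integrableOn_zero).congr_fun (fun y hy => (hg_zero hy).symm) measurableSet_Ioi
  have hI1 : IntegrableOn g (Set.Ioc 0 η) := hgiIoc.mono_set (Set.Ioc_subset_Ioc_right hηρ)
  have hI2 : IntegrableOn g (Set.Ioc η ρ) := hgiIoc.mono_set (Set.Ioc_subset_Ioc_left hη.le)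
  have hIη : IntegrableOn g (Set.Ioi η) := by
    rw [← Set.Ioc_union_Ioi_eq_Ioi hηρ]; exact hI2.union hgiIoi
  have hsplit : ∫ y in Set.Ioi (0:ℝ), g y =
      (∫ y in Set.Ioc (0:ℝ) η, g y) + ∫ y in Set.Ioi η, g y := by
    rw [← setIntegral_union (Set.Ioc_disjoint_Ioi le_rfl) measurableSet_Ioi hI1 hIη,
        Set.Ioc_union_Ioi_eq_Ioi hη.le]
  have hsplit' : ∫ y in Set.Ioi η, g y =
      (∫ y in Set.Ioc η ρ, g y) + ∫ y in Set.Ioi ρ, g y := by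
    rw [← setIntegral_union (Set.Ioc_disjoint_Ioi le_rfl) measurableSet_Ioi hI2 hgiIoi,
        Set.Ioc_union_Ioi_eq_Ioi hηρ]
  have hz : ∫ y in Set.Ioi ρ, g y = 0 := by
    rw [setIntegral_congr_fun measurableSet_Ioi hg_zero]
    simp
  have hB1 : ∫ y in Set.Ioc (0:ℝ) η, g y ≤ K * η ^ (2 - 2*H) / ((d:ℝ) + 1) := by
    have hb : ∫ y in Set.Ioc (0:ℝ) η, (K * η ^ a) * y ^ d
        = K * η ^ a * (η ^ (d+1) / ((d:ℝ)+1)) := by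
      rw [← intervalIntegral.integral_of_le hη.le, intervalIntegral.integral_const_mul,
          integral_pow]
      norm_num
    have hmono : ∫ y in Set.Ioc (0:ℝ) η, g y ≤ ∫ y in Set.Ioc (0:ℝ) η, (K * η ^ a) * y ^ d := by
      apply setIntegral_mono_on hI1 ?_ measurableSet_Ioc ?_
      · exact (Continuous.integrableOn_Ioc (by fun_prop))
      · intro y hy
        calc g y = y ^ d * f y := rfl
          _ ≤ y ^ d * (K * η ^ a) :=
              mul_le_mul_of_nonneg_left (hf_le y) (pow_nonneg hy.1.le d)
          _ = (K * η ^ a) * y ^ d := by ring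
    have hexp : η ^ a * η ^ (d+1) = η ^ (2-2*H) := by
      rw [← Real.rpow_natCast η (d+1), ← Real.rpow_add hη]
      congr 1
      rw [ha_def]; push_cast; ring
    calc ∫ y in Set.Ioc (0:ℝ) η, g y ≤ K * η ^ a * (η ^ (d+1) / ((d:ℝ)+1)) := hmono.trans hb.le
      _ = K * (η ^ a * η ^ (d+1)) / ((d:ℝ)+1) := by ring
      _ = K * η ^ (2-2*H) / ((d:ℝ)+1) := by rw [hexp]
  have hB2 : ∫ y in Set.Ioc η ρ, g y ≤ K * ρ ^ (2-2*H) / (2-2*H) := by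
    have hInt2 : IntegrableOn (fun y : ℝ => K * y ^ (1-2*H)) (Set.Ioc η ρ) := by
      have h1 := (intervalIntegral.intervalIntegrable_rpow' (a := η) (b := ρ) (r := 1-2*H) (by linarith)).const_mul K
      rw [intervalIntegrable_iff, Set.uIoc_of_le hηρ] at h1
      exact h1
    have hpt : ∀ y ∈ Set.Ioc η ρ, g y ≤ K * y ^ (1-2*H) := by
      intro y hy
      have hy0 : 0 < y := lt_trans hη hy.1
      rcases lt_or_eq_of_le hy.2 with hlt | heq
      · have hfy : f y = h y := Set.indicator_of_mem (Set.mem_Iio.mpr hlt) h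
        have hmax : max η y = y := max_eq_right hy.1.le
        have hgy : g y = K * y ^ (1-2*H) := by
          rw [hg_def]
          simp only [hfy, hh_def, hmax]
          rw [show y ^ d * (K * y ^ a) = K * (y ^ d * y ^ a) by ring,
              ← Real.rpow_natCast y d, ← Real.rpow_add hy0]
          congr 1
          rw [ha_def]; push_cast; ring
        exact hgy.le
      · have hfy : f y = 0 := by
          rw [hf_def]
          exact Set.indicator_of_notMem (by simp [heq]) h
        rw [hg_def]
        simp only [hfy, mul_zero]
        positivity
    have hcomp : ∫ y in Set.Ioc η ρ, K * y ^ (1-2*H)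
        = K * ((ρ ^ (2-2*H) - η ^ (2-2*H)) / (2-2*H)) := by
      rw [← intervalIntegral.integral_of_le hηρ, intervalIntegral.integral_const_mul,
          integral_rpow (Or.inl (by linarith))]
      norm_num [show (1:ℝ)-2*H+1 = 2-2*H by ring]
    have hηb : (0:ℝ) ≤ η ^ (2-2*H) := Real.rpow_nonneg hη.le _
    calc ∫ y in Set.Ioc η ρ, g y ≤ ∫ y in Set.Ioc η ρ, K * y ^ (1-2*H) :=
          setIntegral_mono_on hI2 hInt2 measurableSet_Ioc hpt
      _ = K * ((ρ ^ (2-2*H) - η ^ (2-2*H)) / (2-2*H)) := hcomp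
      _ ≤ K * ρ ^ (2-2*H) / (2-2*H) := by
          rw [mul_div_assoc]
          gcongr
          linarith
  -- assemble
  have hX : (0:ℝ) ≤ η ^ (2-2*H) := Real.rpow_nonneg hη.le _
  have hY : (0:ℝ) ≤ ρ ^ (2-2*H) := Real.rpow_nonneg hρ0.le _
  have hIbound : ∫ y in Set.Ioi (0:ℝ), g y ≤
      K * (1 + 1/(2-2*H)) * (η ^ (2-2*H) + ρ ^ (2-2*H)) := by
    have e1 : K * η ^ (2-2*H) / ((d:ℝ)+1) ≤ K * η ^ (2-2*H) :=
      div_le_self (by positivity) (by linarith)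
    have hexpand : K * (1 + 1/(2-2*H)) * (η ^ (2-2*H) + ρ ^ (2-2*H)) =
        K * η ^ (2-2*H) + K * ρ ^ (2-2*H) / (2-2*H)
          + (K * ρ ^ (2-2*H) + K * η ^ (2-2*H) / (2-2*H)) := by
      field_simp
      ring
    have hrest : 0 ≤ K * ρ ^ (2-2*H) + K * η ^ (2-2*H) / (2-2*H) := by positivity
    rw [hsplit, hsplit', hz, add_zero]
    linarith [hB1, hB2]
  have step1 : ∫ q : ℝ × EuclideanSpace ℝ (Fin d), ‖q.2‖ ^ 2 * Φ q ≤
      ∫ x : ℝ × EuclideanSpace ℝ (Fin d), f ‖x‖ :=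
    integral_mono_of_nonneg
      (Filter.Eventually.of_forall (fun q => mul_nonneg (by positivity) (hΦ0 q)))
      hintf (Filter.Eventually.of_forall key)
  calc ∫ q : ℝ × EuclideanSpace ℝ (Fin d), ‖q.2‖ ^ 2 * Φ q
      ≤ ∫ x : ℝ × EuclideanSpace ℝ (Fin d), f ‖x‖ := step1
    _ = (1 + (d:ℝ)) * (c * ∫ y in Set.Ioi (0:ℝ), g y) := step2
    _ ≤ (1 + (d:ℝ)) * (c * (K * (1 + 1/(2-2*H)) * (η ^ (2-2*H) + ρ ^ (2-2*H)))) := by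
        apply mul_le_mul_of_nonneg_left (mul_le_mul_of_nonneg_left hIbound hc0.le) (by positivity)
    _ = (1 + (d:ℝ)) * c * K * (1 + 1/(2-2*H)) * (η ^ (2-2*H) + ρ ^ (2-2*H)) := by ring
end
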